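/- Let Q be a shift-invariant probability measure on Ω = A^ℕ satisfying the upper decoupling property (UD) in event form: Q(A ∩ T^{-n-τ_n}B) ≤ C_n Q(A) Q(B) for all n ∈ ℕ, A ∈ F_n, B measurable, with τ_n = o(n) and C_n = e^{o(n)}. Then for all n, m ∈ ℕ and u ∈ A^n with C_n Q_n(u) ≤ 1, Q{y : W_n(u,y) = m} ≥ (1/(n+τ_n)) Q_n(u) (1 - (n+τ_n)(1 - (1 - C_n Q_n(u))^{⌈(m-1)/(n+τ_n)⌉})). -/
import Mathlib


open MeasureTheory Filter Set
open scoped ENNReal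

namespace RT

variable {A : Type*}

/-- The left shift on one-sided sequences. -/
def shift (x : ℕ → A) : ℕ → A := fun n => x (n + 1)

/-- The cylinder set of a finite word. -/
def cyl {n : ℕ} (u : Fin n → A) : Set (ℕ → A) := {x | ∀ i : Fin n, x i = u i}

/-- Cylinder probability `P_n(u) = P([u])`. -/
noncomputable def cylP [MeasurableSpace A] (P : Measure (ℕ → A)) {n : ℕ}
    (u : Fin n → A) : ℝ := (P (cyl u)).toReal

/-- Events depending only on the first `n` coordinates. -/
def FnSet (n : ℕ) (s : Set (ℕ → A)) : Prop :=
  ∃ S : Set (Fin n → A), s = {x | (fun i : Fin n => x i) ∈ S}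

/-- Waiting time `W_n(u,y)`, with value `⊤` if `u` never occurs in `y`. -/
noncomputable def waitTime {n : ℕ} (u : Fin n → A) (y : ℕ → A) : ℕ∞ :=
  sInf {m : ℕ∞ | ∃ j : ℕ, m = (j : ℕ∞) + 1 ∧ ∀ i : Fin n, y (j + (i : ℕ)) = u i}

/-- Return time `R_n(x)`. -/
noncomputable def returnTime (n : ℕ) (x : ℕ → A) : ℕ∞ :=
  sInf {m : ℕ∞ | ∃ k : ℕ, m = (k : ℕ∞) + 1 ∧ ∀ i : Fin n, x (k + 1 + (i : ℕ)) = x i}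

/-- Nonoverlapping return time `V_n(x)`. -/
noncomputable def vTime (n : ℕ) (x : ℕ → A) : ℕ∞ :=
  sInf {m : ℕ∞ | ∃ k : ℕ, m = (k : ℕ∞) + 1 ∧ ∀ i : Fin n, x (n + k + (i : ℕ)) = x i}

/-- Extended logarithm, with `elog 0 = ⊥` and `elog ⊤ = ⊤`. -/
noncomputable def elog (x : ℝ≥0∞) : EReal :=
  if x = 0 then ⊥ else if x = ⊤ then ⊤ else ((Real.log x.toReal : ℝ) : EReal)

/-- Periodic extension of a word of positive length. -/
def perExt {m : ℕ} (hm : 0 < m) (w : Fin m → A) : ℕ → A :=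
  fun i => w ⟨i % m, Nat.mod_lt i hm⟩

/-- The cylinder determined by the first `m` values of `f`. -/
def cylOf (m : ℕ) (f : ℕ → A) : Set (ℕ → A) := {x | ∀ i < m, x i = f i}

/-- Upper decoupling in event form. -/
def UDE [MeasurableSpace A] (P : Measure (ℕ → A)) (τ : ℕ → ℕ) (C : ℕ → ℝ) : Prop :=
  ∀ n : ℕ, 0 < n → ∀ s : Set (ℕ → A), FnSet n s → ∀ B : Set (ℕ → A), MeasurableSet B →
    (P (s ∩ (shift^[n + τ n]) ⁻¹' B)).toReal ≤ C n * (P s).toReal * (P B).toReal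

/-- Selective lower decoupling in event form. -/
def SLDE [MeasurableSpace A] (P : Measure (ℕ → A)) (τ : ℕ → ℕ) (C : ℕ → ℝ) : Prop :=
  ∀ n : ℕ, 0 < n → ∀ s : Set (ℕ → A), FnSet n s → ∀ B : Set (ℕ → A), MeasurableSet B →
    ∃ ℓ ≤ τ n, (C n)⁻¹ * (P s).toReal * (P B).toReal ≤ (P (s ∩ (shift^[n + ℓ]) ⁻¹' B)).toReal

/-- Upper decoupling (word form). -/
def UD [MeasurableSpace A] (P : Measure (ℕ → A)) (τ : ℕ → ℕ) (C : ℕ → ℝ) : Prop :=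
  ∀ (n m : ℕ), 0 < n → 0 < m → ∀ (u : Fin n → A) (v : Fin m → A) (ξ : Fin (τ n) → A),
    cylP P (Fin.append (Fin.append u ξ) v) ≤ C n * cylP P u * cylP P v

/-- Selective lower decoupling (word form). -/
def SLD [MeasurableSpace A] (P : Measure (ℕ → A)) (τ : ℕ → ℕ) (C : ℕ → ℝ) : Prop :=
  ∀ (n m : ℕ), 0 < n → 0 < m → ∀ (u : Fin n → A) (v : Fin m → A),
    ∃ ℓ ≤ τ n, ∃ ξ : Fin ℓ → A,
      (C n)⁻¹ * cylP P u * cylP P v ≤ cylP P (Fin.append (Fin.append u ξ) v)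

/-- Period of a finite word. -/
noncomputable def wordPeriod {m : ℕ} (u : Fin m → A) : ℕ :=
  sInf {p : ℕ | 1 ≤ p ∧ ∀ (i : ℕ) (h : i + p < m), u ⟨i, by omega⟩ = u ⟨i + p, h⟩}

/-- Legendre–Fenchel transform of an `EReal`-valued function on `ℝ`. -/
noncomputable def LF (f : ℝ → EReal) (α : ℝ) : EReal := ⨆ s : ℝ, ((α * s : ℝ) : EReal) - f s

/-- The waiting-time rate function built from `IQ`. -/
noncomputable def IW (IQ : ℝ → EReal) (s : ℝ) : EReal :=
  if s < 0 then ⊤ else ⨅ r : {r : ℝ // s ≤ r}, ((r.1 - s : ℝ) : EReal) + IQ r.1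

/-! ### Auxiliary machinery for the proof of Statement 2 -/

section Stmt2Aux

set_option linter.unusedSectionVars false

variable [Fintype A] [MeasurableSpace A]

/-- The measurable atom of a point in a finite measurable space. -/
noncomputable def At (a : A) : Set A := ⋂₀ {S : Set A | MeasurableSet S ∧ a ∈ S}

lemma mem_At_self (a : A) : a ∈ At a := fun _ hS => hS.2

lemma At_measurable (a : A) : MeasurableSet (At a) := by
  have hfin : {S : Set A | MeasurableSet S ∧ a ∈ S}.Finite := Set.toFinite _
  exact hfin.measurableSet_sInter (fun t ht => ht.1)

lemma At_subset {a : A} {S : Set A} (hS : MeasurableSet S) (ha : a ∈ S) : At a ⊆ S :=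
  Set.sInter_subset_of_mem ⟨hS, ha⟩

lemma mem_At_symm {a b : A} (h : b ∈ At a) : a ∈ At b := by
  intro S hS
  by_contra hc
  exact (h Sᶜ ⟨hS.1.compl, hc⟩) hS.2

lemma At_eq_of_mem {a b : A} (h : b ∈ At a) : At b = At a :=
  Set.Subset.antisymm (At_subset (At_measurable a) h)
    (At_subset (At_measurable b) (mem_At_symm h))

/-- Every measurable set in the product space is closed under atom-pattern equivalence. -/
lemma pattern_mem {E : Set (ℕ → A)} (hE : MeasurableSet E) {x y : ℕ → A}
    (hx : x ∈ E) (hxy : ∀ i, y i ∈ At (x i)) : y ∈ E := by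
  let m' : MeasurableSpace (ℕ → A) :=
    { MeasurableSet' := fun E => ∀ x ∈ E, ∀ y : ℕ → A, (∀ i, y i ∈ At (x i)) → y ∈ E
      measurableSet_empty := by intro x hx; exact absurd hx (Set.notMem_empty x)
      measurableSet_compl := by
        intro s hs x hx y hxy hyE
        exact hx (hs y hyE x (fun i => mem_At_symm ((At_eq_of_mem (hxy i)) ▸ mem_At_self (y i))))
      measurableSet_iUnion := by
        intro f hf x hx y hxy
        obtain ⟨i, hi⟩ := Set.mem_iUnion.mp hx
        exact Set.mem_iUnion.mpr ⟨i, hf i x hi y hxy⟩ }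
  have hle : (MeasurableSpace.pi : MeasurableSpace (ℕ → A)) ≤ m' := by
    refine iSup_le fun i => ?_
    intro s hs
    obtain ⟨S, hS, rfl⟩ := hs
    intro x hx y hxy
    exact At_subset hS hx (hxy i)
  exact hle E hE x hx y hxy

/-- Atom-level occurrence of the word `u` at position `j`. -/
def OccA {n : ℕ} (u : Fin n → A) (j : ℕ) : Set (ℕ → A) :=
  {y | ∀ i : Fin n, y (j + (i : ℕ)) ∈ At (u i)}

lemma OccA_meas {n : ℕ} (u : Fin n → A) (j : ℕ) : MeasurableSet (OccA u j) := by
  have : OccA u j = ⋂ i : Fin n, (fun y : ℕ → A => y (j + (i:ℕ))) ⁻¹' At (u i) := by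
    ext y; simp [OccA]
  rw [this]
  exact MeasurableSet.iInter fun i => (measurable_pi_apply _) (At_measurable (u i))

lemma shift_iterate_apply (y : ℕ → A) (b k : ℕ) : (shift^[b] y) k = y (k + b) := by
  induction b generalizing y k with
  | zero => rfl
  | succ b ih =>
    rw [Function.iterate_succ, Function.comp_apply, ih]
    show y (k + b + 1) = y (k + (b + 1))
    rw [Nat.add_assoc]

lemma preimage_shift_OccA {n : ℕ} (u : Fin n → A) (a b : ℕ) :
    (shift^[b]) ⁻¹' (OccA u a) = OccA u (a + b) := by
  ext y
  simp only [OccA, Set.mem_preimage, Set.mem_setOf_eq, shift_iterate_apply]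
  constructor
  · intro h i; have := h i; rwa [Nat.add_right_comm] at this
  · intro h i; rw [Nat.add_right_comm]; exact h i

lemma OccA_FnSet {n : ℕ} (u : Fin n → A) : FnSet n (OccA u 0) := by
  refine ⟨{v : Fin n → A | ∀ i, v i ∈ At (u i)}, ?_⟩
  ext y
  simp [OccA]

/-- First atom-level occurrence of `u` at position `j`. -/
def FirstA {n : ℕ} (u : Fin n → A) (j : ℕ) : Set (ℕ → A) :=
  OccA u j ∩ ⋂ (l : ℕ) (_ : l < j), (OccA u l)ᶜ

lemma FirstA_meas {n : ℕ} (u : Fin n → A) (j : ℕ) : MeasurableSet (FirstA u j) :=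
  (OccA_meas u j).inter (MeasurableSet.iInter fun l =>
    MeasurableSet.iInter fun _ => (OccA_meas u l).compl)

lemma waitTime_eq_of {n : ℕ} (u : Fin n → A) (x : ℕ → A) (m : ℕ) (hm : 0 < m)
    (hocc : ∀ i : Fin n, x ((m - 1) + (i : ℕ)) = u i)
    (hno : ∀ j < m - 1, ¬ (∀ i : Fin n, x (j + (i : ℕ)) = u i)) :
    waitTime u x = (m : ℕ∞) := by
  apply le_antisymm
  · have : (m : ℕ∞) = ((m - 1 : ℕ) : ℕ∞) + 1 := by
      norm_cast; omega
    rw [this]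
    exact sInf_le ⟨m - 1, rfl, hocc⟩
  · apply le_sInf
    rintro b ⟨j, rfl, hj⟩
    have hjge : m - 1 ≤ j := by
      by_contra hc
      exact hno j (by omega) hj
    show (m : ℕ∞) ≤ (j : ℕ∞) + 1
    norm_cast
    omega

lemma class_arith (N m j : ℕ) (hN : 0 < N) (hj : j + 1 < m) :
    ∃ r, r < N ∧ r + 1 < m ∧ ∃ t ≤ (m - 2 - r) / N, j = (m - 2 - r) % N + t * N := by
  have hr := Nat.mod_le (m - 2 - j) N
  have hrlt : (m - 2 - j) % N < N := Nat.mod_lt _ hN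
  refine ⟨(m - 2 - j) % N, hrlt, by omega, j / N, ?_, ?_⟩
  · have h1 : m - 2 - (m - 2 - j) % N = j + N * ((m - 2 - j) / N) := by
      have := Nat.mod_add_div (m - 2 - j) N
      omega
    rw [h1, Nat.add_mul_div_left _ _ hN]
    exact Nat.le_add_right _ _
  · have h1 : m - 2 - (m - 2 - j) % N = j + N * ((m - 2 - j) / N) := by
      have := Nat.mod_add_div (m - 2 - j) N
      omega
    rw [h1, Nat.add_mul_mod_self_left]
    exact (Nat.mod_add_div' j N).symm

variable (Q : Measure (ℕ → A)) [IsProbabilityMeasure Q]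

lemma toReal_diff (s t : Set (ℕ → A)) (ht : MeasurableSet t) :
    (Q (s \ t)).toReal = (Q s).toReal - (Q (s ∩ t)).toReal := by
  have h := measure_inter_add_diff (μ := Q) s ht
  have h2 := congrArg ENNReal.toReal h
  rw [ENNReal.toReal_add (measure_ne_top Q _) (measure_ne_top Q _)] at h2
  linarith

lemma Q_OccA (hinv : MeasurePreserving (shift (A := A)) Q Q) {n : ℕ} (u : Fin n → A) (j : ℕ) :
    Q (OccA u j) = Q (OccA u 0) := by
  have h := (hinv.iterate j).measure_preimage (OccA_meas u 0).nullMeasurableSet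
  rw [preimage_shift_OccA, Nat.zero_add] at h
  exact h

lemma cylP_eq {n : ℕ} (u : Fin n → A) : cylP Q u = (Q (OccA u 0)).toReal := by
  have h1 : cyl u ⊆ OccA u 0 := by
    intro y hy i
    rw [Nat.zero_add, hy i]
    exact mem_At_self _
  have h2 : Q (OccA u 0) ≤ Q (cyl u) := by
    rw [show Q (cyl u) = Q (toMeasurable Q (cyl u)) from (measure_toMeasurable _).symm]
    apply measure_mono
    intro y hy
    set x : ℕ → A := fun j => if h : j < n then u ⟨j, h⟩ else y j with hx
    have hxcyl : x ∈ cyl u := by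
      intro i
      simp only [hx, i.isLt, dif_pos]
    have hpat : ∀ j, y j ∈ At (x j) := by
      intro j
      by_cases h : j < n
      · simp only [hx, dif_pos h]
        have := hy ⟨j, h⟩
        rwa [Nat.zero_add] at this
      · simp only [hx, dif_neg h]
        exact mem_At_self _
    exact pattern_mem (measurableSet_toMeasurable Q (cyl u))
      (subset_toMeasurable Q (cyl u) hxcyl) hpat
  have h3 : Q (cyl u) ≤ Q (OccA u 0) := measure_mono h1
  simp [cylP, le_antisymm h3 h2]

lemma firstA_le_wait {n : ℕ} (u : Fin n → A) (m : ℕ) (hm : 0 < m) :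
    Q (FirstA u (m - 1)) ≤ Q {y | waitTime u y = (m : ℕ∞)} := by
  rw [show Q {y | waitTime u y = (m : ℕ∞)}
      = Q (toMeasurable Q {y | waitTime u y = (m : ℕ∞)}) from (measure_toMeasurable _).symm]
  apply measure_mono
  intro y hy
  obtain ⟨hyocc, hyno⟩ := hy
  set x : ℕ → A := fun j =>
    if h : m - 1 ≤ j ∧ j < m - 1 + n then u ⟨j - (m-1), by omega⟩ else y j with hxdef
  have hocc : ∀ i : Fin n, x ((m - 1) + (i : ℕ)) = u i := by
    intro i
    have h : m - 1 ≤ m - 1 + (i:ℕ) ∧ m - 1 + (i:ℕ) < m - 1 + n := ⟨by omega, by omega⟩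
    simp only [hxdef, dif_pos h]
    congr 1
    ext
    simp
  have hAt : ∀ j, At (x j) = At (y j) := by
    intro j
    by_cases h : m - 1 ≤ j ∧ j < m - 1 + n
    · simp only [hxdef, dif_pos h]
      have h2 := hyocc ⟨j - (m-1), by omega⟩
      rw [show m - 1 + (j - (m-1)) = j by omega] at h2
      exact (At_eq_of_mem h2).symm
    · simp only [hxdef, dif_neg h]
  have hno : ∀ j < m - 1, ¬ (∀ i : Fin n, x (j + (i : ℕ)) = u i) := by
    intro j hj hc
    have h2 : y ∉ OccA u j := Set.mem_iInter.mp (Set.mem_iInter.mp hyno j) hj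
    apply h2
    intro i
    have h3 : At (x (j + (i:ℕ))) = At (u i) := by rw [hc i]
    rw [hAt] at h3
    rw [← h3]
    exact mem_At_self _
  have hx : x ∈ {y | waitTime u y = (m : ℕ∞)} := waitTime_eq_of u x m hm hocc hno
  exact pattern_mem (measurableSet_toMeasurable _ _)
    (subset_toMeasurable _ _ hx) (fun j => (hAt j) ▸ mem_At_self (y j))

lemma Q_firstA_mono (hinv : MeasurePreserving (shift (A := A)) Q Q)
    {n : ℕ} (u : Fin n → A) (j i : ℕ) :
    Q (FirstA u (j + i)) ≤ Q (FirstA u j) := by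
  have hsub : FirstA u (j + i) ⊆ (shift^[i]) ⁻¹' (FirstA u j) := by
    intro y hy
    obtain ⟨h1, h2⟩ := hy
    constructor
    · rw [← Set.mem_preimage, preimage_shift_OccA]; exact h1
    · refine Set.mem_iInter.mpr fun l => Set.mem_iInter.mpr fun hl => ?_
      intro hc
      rw [← Set.mem_preimage, preimage_shift_OccA] at hc
      exact Set.mem_iInter.mp (Set.mem_iInter.mp h2 (l + i)) (by omega) hc
  calc Q (FirstA u (j + i)) ≤ Q ((shift^[i]) ⁻¹' (FirstA u j)) := measure_mono hsub
    _ = Q (FirstA u j) :=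
      (hinv.iterate i).measure_preimage (FirstA_meas u j).nullMeasurableSet

lemma G_subset_firstA {n : ℕ} (u : Fin n → A) (m N : ℕ) (hN : 0 < N) :
    OccA u (m - 1 + (N - 1)) ∩ (⋂ (j : ℕ) (_ : j < m - 1), (OccA u j)ᶜ)
      ⊆ ⋃ i ∈ Finset.range N, FirstA u (m - 1 + i) := by
  classical
  intro y hy
  obtain ⟨h1, h2⟩ := hy
  have hex : ∃ j, y ∈ OccA u j := ⟨m - 1 + (N - 1), h1⟩
  have hj0 : y ∈ OccA u (Nat.find hex) := Nat.find_spec hex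
  have hj0min : ∀ l < Nat.find hex, y ∉ OccA u l := fun l hl => Nat.find_min hex hl
  have hge : m - 1 ≤ Nat.find hex := by
    by_contra hc
    exact (Set.mem_iInter.mp (Set.mem_iInter.mp h2 (Nat.find hex)) (by omega)) hj0
  have hle : Nat.find hex ≤ m - 1 + (N - 1) := Nat.find_le h1
  refine Set.mem_biUnion (Finset.mem_range.mpr (show Nat.find hex - (m-1) < N by omega)) ?_
  rw [show m - 1 + (Nat.find hex - (m - 1)) = Nat.find hex by omega]
  exact ⟨hj0, Set.mem_iInter.mpr fun l => Set.mem_iInter.mpr fun hl => hj0min l hl⟩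

lemma peel (hinv : MeasurePreserving (shift (A := A)) Q Q) {n : ℕ} (hn : 0 < n)
    (u : Fin n → A) (τ : ℕ → ℕ) (C : ℕ → ℝ) (hUD : UDE Q τ C)
    (hc : 0 ≤ 1 - C n * (Q (OccA u 0)).toReal) (d : ℕ) :
    ∀ k : ℕ,
      (1 - C n * (Q (OccA u 0)).toReal) ^ k * (Q (OccA u 0)).toReal
        ≤ (Q (OccA u (k * (n + τ n) + d) ∩
            ⋂ (t : ℕ) (_ : t < k), (OccA u (t * (n + τ n)))ᶜ)).toReal := by
  set N := n + τ n with hN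
  set p := (Q (OccA u 0)).toReal with hp
  intro k
  induction k with
  | zero =>
    have : ⋂ (t : ℕ) (_ : t < 0), (OccA u (t * N))ᶜ = Set.univ := by
      ext y; simp
    rw [this, Set.inter_univ, pow_zero, one_mul, Nat.zero_mul, Nat.zero_add,
      Q_OccA Q hinv u d]
  | succ k ih =>
    set E' : Set (ℕ → A) := OccA u (k * N + d) ∩ ⋂ (t : ℕ) (_ : t < k), (OccA u (t * N))ᶜ
      with hE'
    have hE'meas : MeasurableSet E' :=
      (OccA_meas u _).inter (MeasurableSet.iInter fun t =>
        MeasurableSet.iInter fun _ => (OccA_meas u _).compl)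
    have hiter : (shift^[N]) ⁻¹' E'
        = OccA u (k * N + d + N) ∩ ⋂ (t : ℕ) (_ : t < k), (OccA u (t * N + N))ᶜ := by
      simp only [hE', Set.preimage_inter, Set.preimage_iInter, Set.preimage_compl,
        preimage_shift_OccA]
    have hset : OccA u ((k+1) * N + d) ∩ ⋂ (t : ℕ) (_ : t < k+1), (OccA u (t * N))ᶜ
        = ((shift^[N]) ⁻¹' E') \ (OccA u 0) := by
      rw [Set.diff_eq, hiter]
      ext y
      simp only [Set.mem_inter_iff, Set.mem_iInter, Set.mem_compl_iff]
      constructor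
      · rintro ⟨h1, h2⟩
        refine ⟨⟨?_, fun t ht => ?_⟩, ?_⟩
        · rw [show k * N + d + N = (k+1) * N + d by ring]; exact h1
        · have := h2 (t+1) (by omega)
          rw [show (t+1) * N = t * N + N by ring] at this; exact this
        · have := h2 0 (by omega)
          rwa [Nat.zero_mul] at this
      · rintro ⟨⟨h1, h2⟩, h3⟩
        refine ⟨by rw [show (k+1) * N + d = k * N + d + N by ring]; exact h1,
          fun t ht => ?_⟩
        rcases Nat.eq_zero_or_pos t with rfl | htpos
        · rwa [Nat.zero_mul]
        · have := h2 (t - 1) (by omega)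
          rwa [show (t - 1) * N + N = t * N by
            cases t with
            | zero => omega
            | succ t => simp [Nat.succ_sub_one, Nat.succ_mul]] at this
    have hpre : Q ((shift^[N]) ⁻¹' E') = Q E' :=
      (hinv.iterate N).measure_preimage hE'meas.nullMeasurableSet
    have hud := hUD n hn (OccA u 0) (OccA_FnSet u) E' hE'meas
    rw [← hN, ← hp, Set.inter_comm] at hud
    have hsplit := toReal_diff Q ((shift^[N]) ⁻¹' E') (OccA u 0) (OccA_meas u 0)
    have hEp : (1 - C n * p) ^ k * p ≤ (Q E').toReal := ih
    rw [hset, hsplit, hpre]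
    calc (1 - C n * p) ^ (k+1) * p = (1 - C n * p) * ((1 - C n * p) ^ k * p) := by ring
      _ ≤ (1 - C n * p) * (Q E').toReal := mul_le_mul_of_nonneg_left hEp hc
      _ = (Q E').toReal - (C n * p) * (Q E').toReal := by ring
      _ ≤ (Q E').toReal - (Q ((shift^[N]) ⁻¹' E' ∩ OccA u 0)).toReal := by linarith

end Stmt2Aux

/-- Under upper decoupling in event form (gaps `τ_n = o(n)`,
constants `C_n = e^{o(n)}`, `C_n ≥ 1`), for all `n, m ≥ 1` and `u ∈ A^n` with
`C_n Q_n(u) ≤ 1`: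
`Q{y : W_n(u,y) = m} ≥ (1/(n+τ_n)) Q_n(u) (1 - (n+τ_n)(1 - (1 - C_n Q_n(u))^⌈(m-1)/(n+τ_n)⌉))`. -/
theorem stmt2 {A : Type*} [Fintype A] [MeasurableSpace A]
    (Q : Measure (ℕ → A)) [IsProbabilityMeasure Q]
    (hinv : MeasurePreserving (shift (A := A)) Q Q)
    (τ : ℕ → ℕ) (C : ℕ → ℝ)
    (hC1 : ∀ n, 1 ≤ C n)
    (hτo : Tendsto (fun n : ℕ => (τ n : ℝ) / n) atTop (nhds 0))
    (hCo : Tendsto (fun n : ℕ => Real.log (C n) / n) atTop (nhds 0))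
    (hUD : UDE Q τ C) :
    ∀ n : ℕ, 0 < n → ∀ m : ℕ, 0 < m → ∀ u : Fin n → A, C n * cylP Q u ≤ 1 →
      (1 / ((n : ℝ) + τ n)) * cylP Q u *
          (1 - ((n : ℝ) + τ n) *
            (1 - (1 - C n * cylP Q u) ^ ((m - 1 + (n + τ n) - 1) / (n + τ n))))
        ≤ (Q {y | waitTime u y = (m : ℕ∞)}).toReal := by
  intro n hn m hm u hcpu
  classical
  set N := n + τ n with hNdef
  have hNpos : 0 < N := by omega
  rw [cylP_eq Q u] at hcpu ⊢
  set p := (Q (OccA u 0)).toReal with hp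
  have hp0 : 0 ≤ p := ENNReal.toReal_nonneg
  have hcp0 : 0 ≤ C n * p := mul_nonneg (le_trans zero_le_one (hC1 n)) hp0
  have hc : 0 ≤ 1 - C n * p := by linarith
  set K := (m - 1 + N - 1) / N with hK
  set Epos := m - 1 + (N - 1) with hEpos
  set kr : ℕ → ℕ := fun r => if r + 1 < m then (m - 2 - r) / N + 1 else 0 with hkr
  set NoCl : ℕ → Set (ℕ → A) :=
    fun r => ⋂ (t : ℕ) (_ : t < kr r), (OccA u ((m - 2 - r) % N + t * N))ᶜ with hNoCl
  have hNoClMeas : ∀ r, MeasurableSet (NoCl r) := fun r =>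
    MeasurableSet.iInter fun t => MeasurableSet.iInter fun _ => (OccA_meas u _).compl
  set W := {y : ℕ → A | waitTime u y = (m : ℕ∞)} with hW
  -- the per-class peeling bound
  have hclass : ∀ r < N, (1 - C n * p) ^ K * p ≤ (Q (OccA u Epos ∩ NoCl r)).toReal := by
    intro r hr
    by_cases hrm : r + 1 < m
    · have hkrr : kr r = (m - 2 - r) / N + 1 := if_pos hrm
      have hmod := Nat.mod_add_div (m - 2 - r) N
      set q := (m - 2 - r) % N with hq
      set t0 := (m - 2 - r) / N with ht0
      have hEq : Epos = (t0 + 1) * N + r + q := by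
        have h1 : (t0 + 1) * N = N * t0 + N := by ring
        omega
      have hcoremeas : MeasurableSet (OccA u ((t0+1) * N + r) ∩
          ⋂ (t : ℕ) (_ : t < t0 + 1), (OccA u (t * N))ᶜ) :=
        (OccA_meas u _).inter (MeasurableSet.iInter fun t =>
          MeasurableSet.iInter fun _ => (OccA_meas u _).compl)
      have hshift : OccA u Epos ∩ NoCl r
          = (shift^[q]) ⁻¹' (OccA u ((t0+1) * N + r) ∩
              ⋂ (t : ℕ) (_ : t < t0 + 1), (OccA u (t * N))ᶜ) := by
        simp only [Set.preimage_inter, Set.preimage_iInter, Set.preimage_compl,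
          preimage_shift_OccA]
        congr 1
        · rw [hEq]
        · rw [hNoCl]
          simp only [hkrr]
          exact Set.iInter_congr fun t => Set.iInter_congr fun _ => by rw [Nat.add_comm]
      have hQeq : Q (OccA u Epos ∩ NoCl r)
          = Q (OccA u ((t0+1) * N + r) ∩ ⋂ (t : ℕ) (_ : t < t0 + 1), (OccA u (t * N))ᶜ) := by
        rw [hshift]
        exact (hinv.iterate q).measure_preimage hcoremeas.nullMeasurableSet
      have hpeel := peel Q hinv hn u τ C hUD (by rw [← hp]; exact hc) r (t0 + 1)
      rw [← hNdef, ← hp] at hpeel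
      have hKk : t0 + 1 ≤ K := by
        have h2 : m - 1 + N - 1 = (m - 2) + N := by omega
        rw [hK, h2, Nat.add_div_right _ hNpos]
        have := Nat.div_le_div_right (c := N) (show m - 2 - r ≤ m - 2 by omega)
        omega
      calc (1 - C n * p) ^ K * p ≤ (1 - C n * p) ^ (t0 + 1) * p :=
            mul_le_mul_of_nonneg_right (pow_le_pow_of_le_one hc (by linarith) hKk) hp0
        _ ≤ _ := by rw [hQeq]; exact hpeel
    · have hkr0 : kr r = 0 := if_neg hrm
      have hNoClr : NoCl r = Set.univ := by
        rw [hNoCl]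
        ext y
        simp [hkr0]
      rw [hNoClr, Set.inter_univ, Q_OccA Q hinv]
      calc (1 - C n * p) ^ K * p ≤ 1 * p :=
            mul_le_mul_of_nonneg_right (pow_le_one₀ hc (by linarith)) hp0
        _ = p := one_mul p
  set G := OccA u Epos ∩ ⋂ (j : ℕ) (_ : j < m - 1), (OccA u j)ᶜ with hG
  -- covering estimate
  have hcover : OccA u Epos ⊆ G ∪ ⋃ r ∈ Finset.range N, (OccA u Epos \ NoCl r) := by
    intro y hy
    by_cases hyG : ∀ j < m - 1, y ∉ OccA u j
    · left
      exact ⟨hy, Set.mem_iInter.mpr fun j => Set.mem_iInter.mpr fun hj => hyG j hj⟩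
    · right
      push_neg at hyG
      obtain ⟨j, hj, hyj⟩ := hyG
      obtain ⟨r, hrN, hrm, t, ht, hjt⟩ := class_arith N m j hNpos (by omega)
      refine Set.mem_biUnion (Finset.mem_range.mpr hrN) ⟨hy, ?_⟩
      intro hcl
      have hkrr : kr r = (m - 2 - r) / N + 1 := if_pos hrm
      have := Set.mem_iInter.mp (Set.mem_iInter.mp hcl t) (by rw [hkrr]; omega)
      exact this (hjt ▸ hyj)
  have hm1 : Q (OccA u Epos) ≤ Q G + ∑ r ∈ Finset.range N, Q (OccA u Epos \ NoCl r) := by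
    calc Q (OccA u Epos) ≤ Q (G ∪ ⋃ r ∈ Finset.range N, (OccA u Epos \ NoCl r)) :=
          measure_mono hcover
      _ ≤ Q G + Q (⋃ r ∈ Finset.range N, (OccA u Epos \ NoCl r)) := measure_union_le _ _
      _ ≤ Q G + ∑ r ∈ Finset.range N, Q (OccA u Epos \ NoCl r) := by
          gcongr
          exact measure_biUnion_finset_le _ _
  have hm1R : p ≤ (Q G).toReal + ∑ r ∈ Finset.range N, (Q (OccA u Epos \ NoCl r)).toReal := by
    have hne : Q G + ∑ r ∈ Finset.range N, Q (OccA u Epos \ NoCl r) ≠ ⊤ := by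
      apply ENNReal.add_ne_top.mpr
      constructor
      · exact measure_ne_top Q _
      · exact (ENNReal.sum_lt_top.mpr fun r _ => measure_lt_top Q _).ne
    have h2 := ENNReal.toReal_mono hne hm1
    rw [ENNReal.toReal_add (measure_ne_top Q _)
      (ENNReal.sum_lt_top.mpr fun r _ => measure_lt_top Q _).ne,
      ENNReal.toReal_sum (fun r _ => measure_ne_top Q _), Q_OccA Q hinv] at h2
    exact h2
  have hsum : ∑ r ∈ Finset.range N, (Q (OccA u Epos \ NoCl r)).toReal
      ≤ ∑ _r ∈ Finset.range N, (p - (1 - C n * p) ^ K * p) := by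
    apply Finset.sum_le_sum
    intro r hr
    rw [toReal_diff Q _ _ (hNoClMeas r), Q_OccA Q hinv]
    have := hclass r (Finset.mem_range.mp hr)
    linarith
  rw [Finset.sum_const, Finset.card_range, nsmul_eq_mul] at hsum
  have key1 : p ≤ (Q G).toReal + (N : ℝ) * (p - (1 - C n * p) ^ K * p) := by linarith
  -- G is covered by shifted first-occurrence events
  have key2 : (Q G).toReal ≤ (N : ℝ) * (Q W).toReal := by
    have hg1 : Q G ≤ ∑ i ∈ Finset.range N, Q (FirstA u (m - 1 + i)) :=
      le_trans (measure_mono (G_subset_firstA u m N hNpos))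
        (measure_biUnion_finset_le _ _)
    have hg2 : ∀ i : ℕ, Q (FirstA u (m - 1 + i)) ≤ Q W :=
      fun i => le_trans (Q_firstA_mono Q hinv u (m - 1) i) (firstA_le_wait Q u m hm)
    have hg3 : Q G ≤ ∑ _i ∈ Finset.range N, Q W :=
      le_trans hg1 (Finset.sum_le_sum fun i _ => hg2 i)
    rw [Finset.sum_const, Finset.card_range, nsmul_eq_mul] at hg3
    have hne : (N : ℝ≥0∞) * Q W ≠ ⊤ :=
      ENNReal.mul_ne_top (ENNReal.natCast_ne_top N) (measure_ne_top Q _)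
    have h4 := ENNReal.toReal_mono hne hg3
    rwa [ENNReal.toReal_mul, ENNReal.toReal_natCast] at h4
  have hNR : ((n : ℝ) + (τ n : ℝ)) = (N : ℝ) := by rw [hNdef]; push_cast; ring
  rw [hNR]
  have hNRpos : (0 : ℝ) < (N : ℝ) := by exact_mod_cast hNpos
  have hfinal : p * (1 - (N : ℝ) * (1 - (1 - C n * p) ^ K)) ≤ (N : ℝ) * (Q W).toReal := by
    have hr : p * (1 - (N : ℝ) * (1 - (1 - C n * p) ^ K))
        = p - (N : ℝ) * (p - (1 - C n * p) ^ K * p) := by ring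
    linarith
  calc 1 / (N : ℝ) * p * (1 - (N : ℝ) * (1 - (1 - C n * p) ^ K))
      = (1 / (N : ℝ)) * (p * (1 - (N : ℝ) * (1 - (1 - C n * p) ^ K))) := by ring
    _ ≤ (1 / (N : ℝ)) * ((N : ℝ) * (Q W).toReal) := by
        apply mul_le_mul_of_nonneg_left hfinal
        positivity
    _ = (Q W).toReal := by field_simp


end RT
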